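/- Let Ω ⊆ ℝ^m (m ≥ 3) be open with torsion-free C^∞ Christoffel symbols Γ^λ_{μν} : Ω → ℝ, and let γ : I → Ω be a C^∞ curve with (∇γ)(t₀) and (∇²γ)(t₀) linearly independent. Let ℓ₁, …, ℓ_{m−2} : I → (ℝ^m)^* be C^∞ maps into the dual space such that for every t near t₀ the covectors ℓ₁(t), …, ℓ_{m−2}(t) are linearly independent and ℓ_i(t)((∇γ)(t)) = 0 and ℓ_i(t)((∇²γ)(t)) = 0 for all i. Set ψ_i(t) = ℓ_i(t)((∇³γ)(t)). If (∇γ)(t₀), (∇²γ)(t₀), (∇³γ)(t₀) are linearly dependent (i.e. ψ_i(t₀) = 0 for all i), then ψ_i'(t₀) = ℓ_i(t₀)((∇⁴γ)(t₀)) for every i. -/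

import Mathlib

open Set

noncomputable section

/-- Iterated covariant derivative of a curve `γ` with respect to the Christoffel
symbols `Γ` (in local coordinates): `covDeriv Γ γ k` is `∇^{k+1} γ`, i.e.
`covDeriv Γ γ 0 = ∇γ = γ'` and
`(∇^{k+1}γ)^λ(t) = d/dt (∇^k γ)^λ(t) + Σ_{μ,ν} Γ^λ_{μν}(γ(t)) (γ^μ)'(t) (∇^k γ)^ν(t)`. -/
noncomputable def covDeriv {m : ℕ} (Γ : (Fin m → ℝ) → Fin m → Fin m → Fin m → ℝ)
    (γ : ℝ → Fin m → ℝ) : ℕ → ℝ → Fin m → ℝ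
  | 0 => deriv γ
  | k + 1 => fun t l =>
      deriv (fun u => covDeriv Γ γ k u l) t +
        ∑ μ, ∑ ν, Γ (γ t) l μ ν * deriv γ t μ * covDeriv Γ γ k t ν

lemma covDeriv_contDiffOn {m : ℕ} (Γ : (Fin m → ℝ) → Fin m → Fin m → Fin m → ℝ)
    (Ω : Set (Fin m → ℝ))
    (hΓ : ∀ l μ ν, ContDiffOn ℝ (⊤ : ℕ∞) (fun x => Γ x l μ ν) Ω)
    (I : Set ℝ) (hI : IsOpen I)
    (γ : ℝ → Fin m → ℝ) (hγ : ContDiffOn ℝ (⊤ : ℕ∞) γ I) (hγΩ : ∀ t ∈ I, γ t ∈ Ω) :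
    ∀ k l, ContDiffOn ℝ (⊤ : ℕ∞) (fun t => covDeriv Γ γ k t l) I := by
  have hd : ContDiffOn ℝ (⊤ : ℕ∞) (deriv γ) I := hγ.deriv_of_isOpen hI (by simp)
  have hdl : ∀ l, ContDiffOn ℝ (⊤ : ℕ∞) (fun t => deriv γ t l) I := fun l =>
    (ContinuousLinearMap.proj l : (Fin m → ℝ) →L[ℝ] ℝ).contDiff.comp_contDiffOn hd
  intro k
  induction k with
  | zero => exact hdl
  | succ k ih =>
    intro l
    have h1 : ContDiffOn ℝ (⊤ : ℕ∞) (deriv (fun u => covDeriv Γ γ k u l)) I :=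
      (ih l).deriv_of_isOpen hI (by simp)
    have h2 : ContDiffOn ℝ (⊤ : ℕ∞)
        (fun t => ∑ μ, ∑ ν, Γ (γ t) l μ ν * deriv γ t μ * covDeriv Γ γ k t ν) I := by
      apply ContDiffOn.sum; intro μ _
      apply ContDiffOn.sum; intro ν _
      exact (((hΓ l μ ν).comp hγ hγΩ).mul (hdl μ)).mul (ih ν)
    show ContDiffOn ℝ (⊤ : ℕ∞) (fun t => covDeriv Γ γ (k+1) t l) I
    simp only [covDeriv]
    exact h1.add h2


/-- For a torsion-free connection on `Ω ⊆ ℝ^m` (`m ≥ 3`), a `C^∞` curve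
`γ : I → Ω` with `∇γ(t₀), ∇²γ(t₀)` linearly independent, and a `C^∞` coframe
`ℓ₁, …, ℓ_{m−2}` annihilating `∇γ` and `∇²γ` near `t₀`, set `ψᵢ(t) = ℓᵢ(t)(∇³γ(t))`.
If `∇γ(t₀), ∇²γ(t₀), ∇³γ(t₀)` are linearly dependent, then
`ψᵢ'(t₀) = ℓᵢ(t₀)(∇⁴γ(t₀))` for every `i`. -/
theorem characteristic_function_derivative_covariant (m : ℕ) (hm : 3 ≤ m)
    (Γ : (Fin m → ℝ) → Fin m → Fin m → Fin m → ℝ)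
    (Ω : Set (Fin m → ℝ)) (hΩ : IsOpen Ω)
    (hΓ : ∀ l μ ν, ContDiffOn ℝ (⊤ : ℕ∞) (fun x => Γ x l μ ν) Ω)
    (hTF : ∀ x l μ ν, Γ x l μ ν = Γ x l ν μ)
    (I : Set ℝ) (hI : IsOpen I) (hI' : I.OrdConnected)
    (γ : ℝ → Fin m → ℝ) (hγ : ContDiffOn ℝ (⊤ : ℕ∞) γ I) (hγΩ : ∀ t ∈ I, γ t ∈ Ω)
    (t₀ : ℝ) (ht₀ : t₀ ∈ I)
    (hind : LinearIndependent ℝ ![covDeriv Γ γ 0 t₀, covDeriv Γ γ 1 t₀])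
    (ℓ : Fin (m - 2) → ℝ → (Fin m → ℝ) →L[ℝ] ℝ)
    (hℓ : ∀ i, ContDiffOn ℝ (⊤ : ℕ∞) (ℓ i) I)
    (hℓind : ∀ᶠ t in nhds t₀, LinearIndependent ℝ (fun i => ℓ i t))
    (hℓ1 : ∀ᶠ t in nhds t₀, ∀ i, ℓ i t (covDeriv Γ γ 0 t) = 0)
    (hℓ2 : ∀ᶠ t in nhds t₀, ∀ i, ℓ i t (covDeriv Γ γ 1 t) = 0)
    (hdep : ¬ LinearIndependent ℝ
      ![covDeriv Γ γ 0 t₀, covDeriv Γ γ 1 t₀, covDeriv Γ γ 2 t₀]) :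
    ∀ i, deriv (fun t => ℓ i t (covDeriv Γ γ 2 t)) t₀ =
      ℓ i t₀ (covDeriv Γ γ 3 t₀) := by
  intro i
  have hsm := covDeriv_contDiffOn Γ Ω hΓ I hI γ hγ hγΩ
  -- componentwise derivatives
  set D : ℕ → Fin m → ℝ := fun k l => deriv (fun u => covDeriv Γ γ k u l) t₀ with hD
  have hv : ∀ k, HasDerivAt (fun t => covDeriv Γ γ k t) (D k) t₀ := by
    intro k
    rw [hasDerivAt_pi]
    intro l
    exact (((hsm k l).differentiableOn (by simp)).differentiableAt
      (hI.mem_nhds ht₀)).hasDerivAt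
  -- the bilinear correction term at t₀
  set B : (Fin m → ℝ) → (Fin m → ℝ) :=
    fun v l => ∑ μ, ∑ ν, Γ (γ t₀) l μ ν * deriv γ t₀ μ * v ν with hB
  have hstep : ∀ k, covDeriv Γ γ (k+1) t₀ = D k + B (covDeriv Γ γ k t₀) := by
    intro k; funext l; rfl
  have hBlin : ∀ (a b : ℝ) (u w : Fin m → ℝ), B (a • u + b • w) = a • B u + b • B w := by
    intro a b u w
    funext l
    simp only [hB, Pi.add_apply, Pi.smul_apply, smul_eq_mul, Finset.mul_sum]
    rw [← Finset.sum_add_distrib]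
    apply Finset.sum_congr rfl; intro μ _
    rw [← Finset.sum_add_distrib]
    apply Finset.sum_congr rfl; intro ν _
    ring
  -- derivative of ℓ i
  have hℓd : HasDerivAt (ℓ i) (deriv (ℓ i) t₀) t₀ :=
    (((hℓ i).differentiableOn (by simp)).differentiableAt (hI.mem_nhds ht₀)).hasDerivAt
  set L : (Fin m → ℝ) →L[ℝ] ℝ := ℓ i t₀ with hLdef
  set L' : (Fin m → ℝ) →L[ℝ] ℝ := deriv (ℓ i) t₀ with hL'def
  have hψ : ∀ k, HasDerivAt (fun t => ℓ i t (covDeriv Γ γ k t))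
      (L' (covDeriv Γ γ k t₀) + L (D k)) t₀ := fun k => hℓd.clm_apply (hv k)
  -- vanishing at t₀
  have hL0 : L (covDeriv Γ γ 0 t₀) = 0 := hℓ1.self_of_nhds i
  have hL1 : L (covDeriv Γ γ 1 t₀) = 0 := hℓ2.self_of_nhds i
  -- derivatives of eventually-zero functions vanish
  have heq0 : deriv (fun t => ℓ i t (covDeriv Γ γ 0 t)) t₀ = 0 := by
    have : (fun t => ℓ i t (covDeriv Γ γ 0 t)) =ᶠ[nhds t₀] fun _ => (0:ℝ) :=
      hℓ1.mono fun t ht => ht i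
    rw [this.deriv_eq, deriv_const]
  have heq1 : deriv (fun t => ℓ i t (covDeriv Γ γ 1 t)) t₀ = 0 := by
    have : (fun t => ℓ i t (covDeriv Γ γ 1 t)) =ᶠ[nhds t₀] fun _ => (0:ℝ) :=
      hℓ2.mono fun t ht => ht i
    rw [this.deriv_eq, deriv_const]
  have e0 : L' (covDeriv Γ γ 0 t₀) + L (D 0) = 0 := by rw [← (hψ 0).deriv]; exact heq0
  have e1 : L' (covDeriv Γ γ 1 t₀) + L (D 1) = 0 := by rw [← (hψ 1).deriv]; exact heq1
  -- dependence: express ∇³γ(t₀)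
  obtain ⟨g, hg0, j, hgj⟩ := Fintype.not_linearIndependent_iff.mp hdep
  have hg2 : g 2 ≠ 0 := by
    intro h2
    apply hgj
    have := Fintype.linearIndependent_iff.mp hind ![g 0, g 1] ?_
    · fin_cases j
      · exact this 0
      · exact this 1
      · exact h2
    · have := hg0
      simp [Fin.sum_univ_three, h2] at this
      simpa [Fin.sum_univ_two] using this
  set a : ℝ := -(g 0) / g 2 with ha
  set b : ℝ := -(g 1) / g 2 with hb
  have hv2 : covDeriv Γ γ 2 t₀ = a • covDeriv Γ γ 0 t₀ + b • covDeriv Γ γ 1 t₀ := by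
    have h := hg0
    simp [Fin.sum_univ_three] at h
    funext l
    have hl := congrFun h l
    simp only [Pi.add_apply, Pi.smul_apply, Pi.zero_apply, smul_eq_mul] at hl ⊢
    field_simp [ha, hb]
    linear_combination (g 2)⁻¹ * hl - covDeriv Γ γ 2 t₀ l * (inv_mul_cancel₀ hg2)
  -- conclude
  have hD0 : D 0 = covDeriv Γ γ 1 t₀ - B (covDeriv Γ γ 0 t₀) := by
    rw [hstep 0]; abel
  have hD1 : D 1 = covDeriv Γ γ 2 t₀ - B (covDeriv Γ γ 1 t₀) := by
    rw [hstep 1]; abel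
  have hD2 : D 2 = covDeriv Γ γ 3 t₀ - B (covDeriv Γ γ 2 t₀) := by
    rw [hstep 2]; abel
  have hLv2 : L (covDeriv Γ γ 2 t₀) = 0 := by
    rw [hv2]; simp [map_add, map_smul, hL0, hL1]
  rw [(hψ 2).deriv, hD2, hv2, hBlin]
  have k0 : L' (covDeriv Γ γ 0 t₀) = L (B (covDeriv Γ γ 0 t₀)) := by
    rw [hD0] at e0
    have := e0
    rw [map_sub, hL1] at this
    linarith
  have k1 : L' (covDeriv Γ γ 1 t₀) = L (B (covDeriv Γ γ 1 t₀)) := by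
    rw [hD1] at e1
    have := e1
    rw [map_sub, hLv2] at this
    linarith
  simp only [map_add, map_smul, map_sub, k0, k1, smul_eq_mul]
  ring
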